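/- If f is bounded on [0,1] and twice differentiable at a point x ∈ (0,1) with f''(x) ≠ 0, then the Bernstein approximation polynomials p_n(x) = Σ_{k=0}^{n} f(k/n) B_{k,n}(x) satisfy the Voronovskaya asymptotic: lim_{n→∞} n ( f(x) - p_n(x) ) = - x(1-x) f''(x) / 2. -/

import Mathlib

open Filter Finset

/-- binomial weight -/
noncomputable def Bw (n k : ℕ) (x : ℝ) : ℝ := (n.choose k : ℝ) * x ^ k * (1 - x) ^ (n - k)

lemma descChoose {n j i : ℕ} (h : j + i ≤ n) :
    (j + i).descFactorial j * n.choose (j + i) = n.descFactorial j * (n - j).choose i := by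
  have h1 := Nat.choose_mul (n := n) (k := j + i) (s := j) (Nat.le_add_right _ _)
  have h2 := Nat.descFactorial_eq_factorial_mul_choose (j + i) j
  have h3 := Nat.descFactorial_eq_factorial_mul_choose n j
  have h4 : j + i - j = i := by omega
  rw [h4] at h1
  calc (j + i).descFactorial j * n.choose (j + i)
      = Nat.factorial j * ((j+i).choose j * n.choose (j+i)) := by rw [h2]; ring
    _ = Nat.factorial j * (n.choose (j + i) * (j+i).choose j) := by ring
    _ = Nat.factorial j * (n.choose j * (n - j).choose i) := by rw [h1]
    _ = (Nat.factorial j * n.choose j) * (n - j).choose i := by ring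
    _ = _ := by rw [← h3]

lemma moment_aux (n j : ℕ) (x : ℝ) :
    ∑ k ∈ range (n + 1), (k.descFactorial j : ℝ) * Bw n k x
      = (n.descFactorial j : ℝ) * x ^ j := by
  rcases le_or_gt j n with hj | hj
  · have hsub : Finset.Ico j (n + 1) ⊆ range (n + 1) := by
      rw [Finset.range_eq_Ico]; exact Finset.Ico_subset_Ico (Nat.zero_le _) le_rfl
    have hzero : ∀ k ∈ range (n + 1), k ∉ Finset.Ico j (n + 1) →
        (k.descFactorial j : ℝ) * Bw n k x = 0 := by
      intro k hk hk2
      simp only [Finset.mem_range] at hk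
      simp only [Finset.mem_Ico] at hk2
      have : k < j := by omega
      rw [Nat.descFactorial_eq_zero_iff_lt.2 this]
      simp
    rw [← Finset.sum_subset hsub hzero, Finset.sum_Ico_eq_sum_range]
    have hn1 : n + 1 - j = (n - j) + 1 := by omega
    rw [hn1]
    have hterm : ∀ i ∈ range ((n - j) + 1),
        ((j + i).descFactorial j : ℝ) * Bw n (j + i) x
          = (n.descFactorial j : ℝ) * x ^ j *
              (x ^ i * (1 - x) ^ ((n - j) - i) * ((n - j).choose i : ℝ)) := by
      intro i hi
      simp only [Finset.mem_range] at hi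
      have hji : j + i ≤ n := by omega
      have := descChoose hji
      have hcast : ((j + i).descFactorial j : ℝ) * (n.choose (j + i) : ℝ)
          = (n.descFactorial j : ℝ) * ((n - j).choose i : ℝ) := by exact_mod_cast congrArg (Nat.cast : ℕ → ℝ) this
      have hexp : n - (j + i) = (n - j) - i := by omega
      unfold Bw
      rw [hexp, pow_add]
      calc ((j + i).descFactorial j : ℝ) * ((n.choose (j + i) : ℝ) * (x ^ j * x ^ i) * (1 - x) ^ (n - j - i))
          = (((j + i).descFactorial j : ℝ) * (n.choose (j + i) : ℝ)) * (x ^ j * x ^ i) * (1 - x) ^ (n - j - i) := by ring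
        _ = ((n.descFactorial j : ℝ) * ((n - j).choose i : ℝ)) * (x ^ j * x ^ i) * (1 - x) ^ (n - j - i) := by rw [hcast]
        _ = _ := by ring
    rw [Finset.sum_congr rfl hterm, ← Finset.mul_sum]
    have hbin : ∑ i ∈ range ((n - j) + 1), x ^ i * (1 - x) ^ ((n - j) - i) * ((n - j).choose i : ℝ) = 1 := by
      have := add_pow x (1 - x) (n - j)
      simp only [add_sub_cancel, one_pow] at this
      rw [← this]
    rw [hbin, mul_one]
  · have hzero : ∀ k ∈ range (n + 1), (k.descFactorial j : ℝ) * Bw n k x = 0 := by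
      intro k hk
      simp only [Finset.mem_range] at hk
      rw [Nat.descFactorial_eq_zero_iff_lt.2 (by omega)]
      simp
    rw [Finset.sum_congr rfl hzero, Nat.descFactorial_eq_zero_iff_lt.2 hj]
    simp

lemma dcast1 (k : ℕ) : (k.descFactorial 1 : ℝ) = (k : ℝ) := by
  simp [Nat.descFactorial]

lemma dcast2 (k : ℕ) : (k.descFactorial 2 : ℝ) = (k : ℝ) * ((k : ℝ) - 1) := by
  rcases k with _ | m
  · simp [Nat.descFactorial]
  · simp [Nat.descFactorial]; ring

lemma dcast3 (k : ℕ) : (k.descFactorial 3 : ℝ) = (k : ℝ) * ((k : ℝ) - 1) * ((k : ℝ) - 2) := by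
  rcases k with _ | _ | m
  · simp [Nat.descFactorial]
  · simp [Nat.descFactorial]
  · simp [Nat.descFactorial]; ring

lemma dcast4 (k : ℕ) : (k.descFactorial 4 : ℝ) = (k : ℝ) * ((k : ℝ) - 1) * ((k : ℝ) - 2) * ((k : ℝ) - 3) := by
  rcases k with _ | _ | _ | m
  · simp [Nat.descFactorial]
  · simp [Nat.descFactorial]
  · simp [Nat.descFactorial]
  · simp [Nat.descFactorial]; ring

lemma sum_Bw (n : ℕ) (x : ℝ) : ∑ k ∈ range (n + 1), Bw n k x = 1 := by
  have := moment_aux n 0 x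
  simpa using this

lemma moment1 (n : ℕ) (x : ℝ) :
    ∑ k ∈ range (n + 1), ((k : ℝ) - n * x) * Bw n k x = 0 := by
  have h1 := moment_aux n 1 x
  have h0 := sum_Bw n x
  simp only [dcast1] at h1
  calc ∑ k ∈ range (n + 1), ((k : ℝ) - n * x) * Bw n k x
      = (∑ k ∈ range (n + 1), (k : ℝ) * Bw n k x)
        - n * x * ∑ k ∈ range (n + 1), Bw n k x := by
        rw [Finset.mul_sum, ← Finset.sum_sub_distrib]; congr 1; ext k; ring
    _ = 0 := by rw [h1, h0]; ring

lemma moment2 (n : ℕ) (x : ℝ) :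
    ∑ k ∈ range (n + 1), ((k : ℝ) - n * x) ^ 2 * Bw n k x = n * x * (1 - x) := by
  have h2 := moment_aux n 2 x
  have h1 := moment_aux n 1 x
  have h0 := sum_Bw n x
  simp only [dcast1] at h1
  simp only [dcast2] at h2
  calc ∑ k ∈ range (n + 1), ((k : ℝ) - n * x) ^ 2 * Bw n k x
      = (∑ k ∈ range (n + 1), ((k : ℝ) * ((k : ℝ) - 1)) * Bw n k x)
        + (1 - 2 * n * x) * ∑ k ∈ range (n + 1), (k : ℝ) * Bw n k x
        + (n * x) ^ 2 * ∑ k ∈ range (n + 1), Bw n k x := by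
        rw [Finset.mul_sum, Finset.mul_sum, ← Finset.sum_add_distrib, ← Finset.sum_add_distrib]
        congr 1; ext k; ring
    _ = _ := by rw [h2, h1, h0]; ring

lemma moment4 (n : ℕ) (x : ℝ) :
    ∑ k ∈ range (n + 1), ((k : ℝ) - n * x) ^ 4 * Bw n k x
      = n * x * (1 - x) * (1 + 3 * ((n : ℝ) - 2) * x * (1 - x)) := by
  have h4 := moment_aux n 4 x
  have h3 := moment_aux n 3 x
  have h2 := moment_aux n 2 x
  have h1 := moment_aux n 1 x
  have h0 := sum_Bw n x
  simp only [dcast1] at h1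
  simp only [dcast2] at h2
  simp only [dcast3] at h3
  simp only [dcast4] at h4
  calc ∑ k ∈ range (n + 1), ((k : ℝ) - n * x) ^ 4 * Bw n k x
      = (∑ k ∈ range (n + 1), ((k:ℝ) * ((k:ℝ)-1) * ((k:ℝ)-2) * ((k:ℝ)-3)) * Bw n k x)
        + (6 - 4 * n * x) * ∑ k ∈ range (n + 1), ((k:ℝ) * ((k:ℝ)-1) * ((k:ℝ)-2)) * Bw n k x
        + (7 - 12 * n * x + 6 * (n*x)^2) * ∑ k ∈ range (n + 1), ((k:ℝ) * ((k:ℝ)-1)) * Bw n k x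
        + (1 - 4 * n * x + 6 * (n*x)^2 - 4 * (n*x)^3) * ∑ k ∈ range (n + 1), (k:ℝ) * Bw n k x
        + (n*x)^4 * ∑ k ∈ range (n + 1), Bw n k x := by
        rw [Finset.mul_sum, Finset.mul_sum, Finset.mul_sum, Finset.mul_sum,
          ← Finset.sum_add_distrib, ← Finset.sum_add_distrib, ← Finset.sum_add_distrib,
          ← Finset.sum_add_distrib]
        congr 1; ext k; ring
    _ = _ := by rw [h4, h3, h2, h1, h0]; ring

lemma peano (f : ℝ → ℝ) (x : ℝ)
    (hdiff : ∀ᶠ y in nhds x, DifferentiableAt ℝ f y)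
    (hdiff2 : DifferentiableAt ℝ (deriv f) x) :
    ∀ ε > (0:ℝ), ∃ δ > (0:ℝ), ∀ y : ℝ, |y - x| ≤ δ →
      |f y - f x - deriv f x * (y - x) - deriv (deriv f) x / 2 * (y - x) ^ 2|
        ≤ ε * (y - x) ^ 2 := by
  intro ε hε
  set a := deriv f x with ha
  set b := deriv (deriv f) x with hb
  have hlo : (fun t => deriv f t - a - (t - x) * b) =o[nhds x] fun t => t - x := by
    have := hdiff2.hasDerivAt
    rw [hasDerivAt_iff_isLittleO] at this
    simpa [smul_eq_mul] using this
  have hev : ∀ᶠ t in nhds x, |deriv f t - a - (t - x) * b| ≤ ε * |t - x| := by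
    have := hlo.def hε
    filter_upwards [this] with t ht
    simpa [Real.norm_eq_abs] using ht
  obtain ⟨δ', hδ'pos, hδ'⟩ := Metric.eventually_nhds_iff.1 (hev.and hdiff)
  refine ⟨δ' / 2, by positivity, fun y hy => ?_⟩
  set g : ℝ → ℝ := fun t => f t - a * t - b / 2 * (t - x) ^ 2 with hg
  set s : Set ℝ := Set.Icc (min x y) (max x y) with hs
  have habs : ∀ t ∈ s, |t - x| ≤ |y - x| := by
    intro t ht
    rw [hs, Set.mem_Icc] at ht
    rcases le_total x y with h | h
    · rw [min_eq_left h, max_eq_right h] at ht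
      rw [abs_of_nonneg (by linarith [ht.1]), abs_of_nonneg (by linarith)]
      linarith [ht.2]
    · rw [min_eq_right h, max_eq_left h] at ht
      rw [abs_of_nonpos (by linarith [ht.2]), abs_of_nonpos (by linarith)]
      linarith [ht.1]
  have hsub : ∀ t ∈ s, dist t x < δ' := by
    intro t ht
    rw [Real.dist_eq]
    calc |t - x| ≤ |y - x| := habs t ht
      _ ≤ δ' / 2 := hy
      _ < δ' := by linarith
  have hderiv : ∀ t ∈ s, HasDerivWithinAt g (deriv f t - a - (t - x) * b) s t := by
    intro t ht
    have hd : DifferentiableAt ℝ f t := (hδ' (hsub t ht)).2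
    have h1 : HasDerivAt f (deriv f t) t := hd.hasDerivAt
    have h2 : HasDerivAt (fun t : ℝ => a * t) a t := by
      simpa using (hasDerivAt_id t).const_mul a
    have h3 : HasDerivAt (fun t : ℝ => b / 2 * (t - x) ^ 2) (b / 2 * (2 * (t - x))) t := by
      have := ((hasDerivAt_id t).sub_const x).pow 2
      simpa using this.const_mul (b / 2)
    have h4 := (h1.sub h2).sub h3
    have heq : deriv f t - a - b / 2 * (2 * (t - x)) = deriv f t - a - (t - x) * b := by ring
    rw [heq] at h4
    exact h4.hasDerivWithinAt
  have hbound : ∀ t ∈ s, ‖deriv f t - a - (t - x) * b‖ ≤ ε * |y - x| := by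
    intro t ht
    have h1 : |deriv f t - a - (t - x) * b| ≤ ε * |t - x| := (hδ' (hsub t ht)).1
    calc ‖deriv f t - a - (t - x) * b‖ = |deriv f t - a - (t - x) * b| := rfl
      _ ≤ ε * |t - x| := h1
      _ ≤ ε * |y - x| := by nlinarith [abs_nonneg (t - x), habs t ht]
  have hxs : x ∈ s := by
    rw [hs, Set.mem_Icc]; exact ⟨min_le_left _ _, le_max_left _ _⟩
  have hys : y ∈ s := by
    rw [hs, Set.mem_Icc]; exact ⟨min_le_right _ _, le_max_right _ _⟩
  have hmvt := (convex_Icc (min x y) (max x y)).norm_image_sub_le_of_norm_hasDerivWithin_le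
    hderiv hbound hxs hys
  have hgx : g x = f x - a * x := by simp [hg]
  have hgy : g y = f y - a * y - b / 2 * (y - x) ^ 2 := by simp [hg]
  have hkey : g y - g x = f y - f x - a * (y - x) - b / 2 * (y - x) ^ 2 := by
    rw [hgx, hgy]; ring
  have hmvt' : |g y - g x| ≤ ε * |y - x| * |y - x| := by
    simpa [Real.norm_eq_abs] using hmvt
  rw [hkey] at hmvt'
  calc |f y - f x - a * (y - x) - b / 2 * (y - x) ^ 2|
      ≤ ε * |y - x| * |y - x| := hmvt'
    _ = ε * (y - x) ^ 2 := by rw [mul_assoc, ← abs_mul, ← sq, abs_sq]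

lemma Bw_nonneg {n k : ℕ} {x : ℝ} (h0 : 0 ≤ x) (h1 : x ≤ 1) : 0 ≤ Bw n k x := by
  unfold Bw
  have : (0:ℝ) ≤ 1 - x := by linarith
  positivity

lemma cm1 {n : ℕ} (hn : 1 ≤ n) (x : ℝ) :
    ∑ k ∈ range (n + 1), ((k : ℝ) / n - x) * Bw n k x = 0 := by
  have hne : (n : ℝ) ≠ 0 := by positivity
  have h : ∀ k ∈ range (n + 1),
      ((k : ℝ) / n - x) * Bw n k x = ((k : ℝ) - n * x) * Bw n k x / n := by
    intro k _; field_simp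
  rw [Finset.sum_congr rfl h, ← Finset.sum_div, moment1, zero_div]

lemma cm2 {n : ℕ} (hn : 1 ≤ n) (x : ℝ) :
    ∑ k ∈ range (n + 1), ((k : ℝ) / n - x) ^ 2 * Bw n k x = x * (1 - x) / n := by
  have hne : (n : ℝ) ≠ 0 := by positivity
  have h : ∀ k ∈ range (n + 1),
      ((k : ℝ) / n - x) ^ 2 * Bw n k x = ((k : ℝ) - n * x) ^ 2 * Bw n k x / (n:ℝ)^2 := by
    intro k _; field_simp
  rw [Finset.sum_congr rfl h, ← Finset.sum_div, moment2]
  field_simp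

lemma cm4 {n : ℕ} (hn : 2 ≤ n) {x : ℝ} (h0 : 0 ≤ x) (h1 : x ≤ 1) :
    ∑ k ∈ range (n + 1), ((k : ℝ) / n - x) ^ 4 * Bw n k x ≤ 1 / (n:ℝ)^2 := by
  have hne : (n : ℝ) ≠ 0 := by positivity
  have hn2 : (2:ℝ) ≤ n := by exact_mod_cast hn
  have h : ∀ k ∈ range (n + 1),
      ((k : ℝ) / n - x) ^ 4 * Bw n k x = ((k : ℝ) - n * x) ^ 4 * Bw n k x / (n:ℝ)^4 := by
    intro k _; field_simp
  rw [Finset.sum_congr rfl h, ← Finset.sum_div, moment4]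
  rw [div_le_div_iff₀ (by positivity) (by positivity)]
  have hu1 : x * (1 - x) ≤ 1/4 := by nlinarith [sq_nonneg (x - 1/2)]
  have hu0 : 0 ≤ x * (1 - x) := by nlinarith
  have hq2 : x * (1 - x) * (x * (1 - x)) ≤ 1/16 := by nlinarith
  have hn0 : (0:ℝ) ≤ (n:ℝ) - 2 := by linarith
  have hm4 : (n:ℝ) * x * (1 - x) * (1 + 3 * ((n : ℝ) - 2) * x * (1 - x)) ≤ (n:ℝ)^2 := by
    have e1 : (n:ℝ) * x * (1 - x) * (1 + 3 * ((n : ℝ) - 2) * x * (1 - x))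
        = (n:ℝ) * (x * (1 - x)) + 3 * (n:ℝ) * ((n:ℝ) - 2) * (x * (1 - x) * (x * (1 - x))) := by
      ring
    have b1 : (n:ℝ) * (x * (1 - x)) ≤ (n:ℝ) * (1/4) :=
      mul_le_mul_of_nonneg_left hu1 (by linarith)
    have b2 : 3 * (n:ℝ) * ((n:ℝ) - 2) * (x * (1 - x) * (x * (1 - x)))
        ≤ 3 * (n:ℝ) * ((n:ℝ) - 2) * (1/16) :=
      mul_le_mul_of_nonneg_left hq2 (by nlinarith)
    rw [e1]
    nlinarith [sq_nonneg ((n:ℝ))]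
  calc (n:ℝ) * x * (1 - x) * (1 + 3 * ((n : ℝ) - 2) * x * (1 - x)) * (n:ℝ)^2
      ≤ (n:ℝ)^2 * (n:ℝ)^2 := by nlinarith [sq_nonneg (n:ℝ)]
    _ = 1 * (n:ℝ)^4 := by ring

theorem voronovskaya (f : ℝ → ℝ) (x : ℝ) (hx0 : 0 < x) (hx1 : x < 1)
    (C : ℝ) (hbdd : ∀ y ∈ Set.Icc (0 : ℝ) 1, |f y| ≤ C)
    (hdiff : ∀ᶠ y in nhds x, DifferentiableAt ℝ f y)
    (hdiff2 : DifferentiableAt ℝ (deriv f) x)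
    (hne : deriv (deriv f) x ≠ 0) :
    Tendsto (fun n : ℕ =>
        (n : ℝ) * (f x - ∑ k ∈ Finset.range (n + 1),
          f ((k : ℝ) / (n : ℝ)) * (n.choose k : ℝ) * x ^ k * (1 - x) ^ (n - k)))
      atTop (nhds (-(x * (1 - x) * deriv (deriv f) x / 2))) := by
  set a := deriv f x with ha
  set b := deriv (deriv f) x with hb
  set E : ℝ → ℝ := fun y => f y - f x - a * (y - x) - b / 2 * (y - x) ^ 2 with hE
  set R : ℕ → ℝ := fun n => (n : ℝ) * ∑ k ∈ range (n + 1), E ((k : ℝ) / n) * Bw n k x with hR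
  -- key algebraic identity for n ≥ 1
  have key : ∀ n : ℕ, 1 ≤ n →
      (n : ℝ) * (f x - ∑ k ∈ Finset.range (n + 1),
          f ((k : ℝ) / (n : ℝ)) * (n.choose k : ℝ) * x ^ k * (1 - x) ^ (n - k))
        = -(x * (1 - x) * b / 2) - R n := by
    intro n hn
    have hne' : (n : ℝ) ≠ 0 := by positivity
    have hS : ∑ k ∈ Finset.range (n + 1),
        f ((k : ℝ) / (n : ℝ)) * (n.choose k : ℝ) * x ^ k * (1 - x) ^ (n - k)
        = ∑ k ∈ range (n + 1), f ((k : ℝ) / n) * Bw n k x := by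
      apply Finset.sum_congr rfl; intro k _; unfold Bw; ring
    have hfx : f x = ∑ k ∈ range (n + 1), f x * Bw n k x := by
      rw [← Finset.mul_sum, sum_Bw, mul_one]
    have hsplit : f x - ∑ k ∈ range (n + 1), f ((k : ℝ) / n) * Bw n k x
        = -a * ∑ k ∈ range (n + 1), ((k : ℝ) / n - x) * Bw n k x
          - b / 2 * ∑ k ∈ range (n + 1), ((k : ℝ) / n - x) ^ 2 * Bw n k x
          - ∑ k ∈ range (n + 1), E ((k : ℝ) / n) * Bw n k x := by
      conv_lhs => rw [hfx]
      rw [← Finset.sum_sub_distrib, Finset.mul_sum, Finset.mul_sum,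
        ← Finset.sum_sub_distrib, ← Finset.sum_sub_distrib]
      apply Finset.sum_congr rfl; intro k _
      simp only [hE]; ring
    rw [hS, hsplit, cm1 hn, cm2 hn, hR]
    have halg : ∀ S : ℝ, (n:ℝ) * (-a * 0 - b / 2 * (x * (1 - x) / n) - S)
        = -(x * (1 - x) * b / 2) - (n:ℝ) * S := by
      intro S
      field_simp
      ring
    exact halg _
  -- R tends to 0
  have hC0 : 0 ≤ C := le_trans (abs_nonneg _) (hbdd x ⟨le_of_lt hx0, le_of_lt hx1⟩)
  have hRlim : Tendsto R atTop (nhds 0) := by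
    rw [NormedAddCommGroup.tendsto_nhds_zero]
    intro ε hε
    obtain ⟨δ, hδ, hpeano⟩ := peano f x hdiff hdiff2 ε hε
    set M : ℝ := 2 * C + |a| + |b| / 2 with hM
    have hM0 : 0 ≤ M := by positivity
    set T : ℝ := M / δ ^ 4 with hT
    have hT0 : 0 ≤ T := by positivity
    obtain ⟨N, hN⟩ := exists_nat_gt (2 * T / ε)
    rw [eventually_atTop]
    refine ⟨max N 2, fun n hnN => ?_⟩
    have hn2 : 2 ≤ n := le_trans (le_max_right _ _) hnN
    have hn1 : 1 ≤ n := by omega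
    have hnn : (N : ℝ) ≤ n := by exact_mod_cast le_trans (le_max_left _ _) hnN
    have hnpos : (0:ℝ) < n := by positivity
    -- pointwise bound on E
    have hpt : ∀ k ∈ range (n + 1),
        |E ((k : ℝ) / n)| ≤ ε * ((k : ℝ) / n - x) ^ 2 + T * ((k : ℝ) / n - x) ^ 4 := by
      intro k hk
      simp only [Finset.mem_range] at hk
      have hk01 : (k : ℝ) / n ∈ Set.Icc (0:ℝ) 1 := by
        constructor
        · positivity
        · rw [div_le_one hnpos]; exact_mod_cast Nat.lt_succ_iff.1 hk
      rcases le_or_gt |(k : ℝ) / n - x| δ with hcase | hcase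
      · have := hpeano ((k : ℝ) / n) hcase
        have h4 : 0 ≤ T * ((k : ℝ) / n - x) ^ 4 := by positivity
        calc |E ((k : ℝ) / n)| ≤ ε * ((k : ℝ) / n - x) ^ 2 := this
          _ ≤ _ := by linarith
      · have habs1 : |(k : ℝ) / n - x| ≤ 1 := by
          rw [abs_sub_le_iff]
          constructor <;> [skip; skip] <;>
            · rcases hk01 with ⟨hl, hr⟩; linarith
        have hEM : |E ((k : ℝ) / n)| ≤ M := by
          have h1 : |f ((k : ℝ) / n)| ≤ C := hbdd _ hk01
          have h2 : |f x| ≤ C := hbdd x ⟨le_of_lt hx0, le_of_lt hx1⟩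
          have h3 : |a * ((k : ℝ) / n - x)| ≤ |a| := by
            rw [abs_mul]
            calc |a| * |(k : ℝ) / n - x| ≤ |a| * 1 := by
                  exact mul_le_mul_of_nonneg_left habs1 (abs_nonneg a)
              _ = |a| := mul_one _
          have h4 : |b / 2 * ((k : ℝ) / n - x) ^ 2| ≤ |b| / 2 := by
            rw [abs_mul, abs_div]
            have : |((k : ℝ) / n - x) ^ 2| ≤ 1 := by
              rw [abs_pow]
              calc |(k : ℝ) / n - x| ^ 2 ≤ 1 ^ 2 := by
                    exact pow_le_pow_left₀ (abs_nonneg _) habs1 2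
                _ = 1 := one_pow 2
            calc |b| / |(2:ℝ)| * |((k : ℝ) / n - x) ^ 2| ≤ |b| / |(2:ℝ)| * 1 := by
                  exact mul_le_mul_of_nonneg_left this (by positivity)
              _ = |b| / 2 := by rw [mul_one]; norm_num
          simp only [hE]
          calc |f ((k:ℝ)/n) - f x - a * ((k:ℝ)/n - x) - b / 2 * ((k:ℝ)/n - x) ^ 2|
              ≤ |f ((k:ℝ)/n)| + |f x| + |a * ((k:ℝ)/n - x)| + |b / 2 * ((k:ℝ)/n - x) ^ 2| := by
                have t1 := abs_sub (f ((k:ℝ)/n) - f x - a * ((k:ℝ)/n - x)) (b / 2 * ((k:ℝ)/n - x) ^ 2)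
                have t2 := abs_sub (f ((k:ℝ)/n) - f x) (a * ((k:ℝ)/n - x))
                have t3 := abs_sub (f ((k:ℝ)/n)) (f x)
                linarith
            _ ≤ 2 * C + |a| + |b| / 2 := by linarith
        have hδ4 : δ ^ 4 ≤ ((k : ℝ) / n - x) ^ 4 := by
          calc δ ^ 4 ≤ |(k : ℝ) / n - x| ^ 4 := by
                exact pow_le_pow_left₀ (le_of_lt hδ) (le_of_lt hcase) 4
            _ = ((k : ℝ) / n - x) ^ 4 := by
                rw [← abs_pow, abs_of_nonneg (by positivity)]
        have : M ≤ T * ((k : ℝ) / n - x) ^ 4 := by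
          rw [hT, div_mul_eq_mul_div, le_div_iff₀ (by positivity)]
          calc M * δ ^ 4 ≤ M * ((k : ℝ) / n - x) ^ 4 := by
                exact mul_le_mul_of_nonneg_left hδ4 hM0
            _ = _ := by ring
        have h2 : 0 ≤ ε * ((k : ℝ) / n - x) ^ 2 := by positivity
        linarith [le_trans hEM this]
    -- sum bound
    have hsum : |∑ k ∈ range (n + 1), E ((k : ℝ) / n) * Bw n k x|
        ≤ ε * (x * (1 - x) / n) + T * (1 / (n:ℝ)^2) := by
      calc |∑ k ∈ range (n + 1), E ((k : ℝ) / n) * Bw n k x|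
          ≤ ∑ k ∈ range (n + 1), |E ((k : ℝ) / n) * Bw n k x| :=
            Finset.abs_sum_le_sum_abs _ _
        _ ≤ ∑ k ∈ range (n + 1),
            (ε * ((k : ℝ) / n - x) ^ 2 + T * ((k : ℝ) / n - x) ^ 4) * Bw n k x := by
            apply Finset.sum_le_sum
            intro k hk
            rw [abs_mul, abs_of_nonneg (Bw_nonneg (le_of_lt hx0) (le_of_lt hx1))]
            exact mul_le_mul_of_nonneg_right (hpt k hk)
              (Bw_nonneg (le_of_lt hx0) (le_of_lt hx1))
        _ = ε * ∑ k ∈ range (n + 1), ((k : ℝ) / n - x) ^ 2 * Bw n k x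
            + T * ∑ k ∈ range (n + 1), ((k : ℝ) / n - x) ^ 4 * Bw n k x := by
            rw [Finset.mul_sum, Finset.mul_sum, ← Finset.sum_add_distrib]
            apply Finset.sum_congr rfl; intro k _; ring
        _ ≤ ε * (x * (1 - x) / n) + T * (1 / (n:ℝ)^2) := by
            rw [cm2 hn1]
            have := cm4 hn2 (le_of_lt hx0) (le_of_lt hx1)
            have h4 := mul_le_mul_of_nonneg_left this hT0
            linarith
    have hxx : x * (1 - x) ≤ 1/4 := by nlinarith [sq_nonneg (x - 1/2)]
    have hRn : ‖R n‖ ≤ ε / 4 + T / n := by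
      rw [hR, Real.norm_eq_abs, abs_mul, abs_of_nonneg (le_of_lt hnpos)]
      calc (n:ℝ) * |∑ k ∈ range (n + 1), E ((k : ℝ) / n) * Bw n k x|
          ≤ (n:ℝ) * (ε * (x * (1 - x) / n) + T * (1 / (n:ℝ)^2)) :=
            mul_le_mul_of_nonneg_left hsum (le_of_lt hnpos)
        _ = ε * (x * (1 - x)) + T / n := by field_simp
        _ ≤ ε / 4 + T / n := by nlinarith
    have htail : T / n < ε / 2 := by
      rcases eq_or_lt_of_le hT0 with h | h
      · rw [← h]; simp; positivity
      · rw [div_lt_iff₀ hnpos]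
        have hN' : 2 * T / ε < (n:ℝ) := lt_of_lt_of_le hN hnn
        rw [div_lt_iff₀ hε] at hN'
        nlinarith
    calc ‖R n‖ ≤ ε / 4 + T / n := hRn
      _ < ε / 4 + ε / 2 := by linarith
      _ < ε := by linarith
  -- conclude
  have hfinal : Tendsto (fun n : ℕ => -(x * (1 - x) * b / 2) - R n) atTop
      (nhds (-(x * (1 - x) * b / 2))) := by
    have h := (tendsto_const_nhds (x := -(x * (1 - x) * b / 2)) (f := atTop (α := ℕ))).sub hRlim
    rw [sub_zero] at h
    exact h
  apply hfinal.congr'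
  filter_upwards [eventually_ge_atTop 1] with n hn
  exact (key n hn).symm
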